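/- Let (V, r, par) be a rooted tree, D a finite nonempty type, and for each non-root vertex v let h_v : D × D → ℝ be a cost function between v and its parent. Suppose m : V → D → ℝ satisfies, for every vertex v and every d ∈ D, m v d = Σ_{c ∈ C(v)} min_{d' ∈ D} (h_c(d', d) + m c d'). Then the minimum over all assignments σ : V → D of Σ_{v ≠ r} h_v(σ v, σ (par v)) equals min_{d ∈ D} m r d. (Correctness of the bottom-up utility-propagation/DPOP recursion on a tree, the backbone of the completeness of AsymDPOP's utility and value propagation phases.) -/

import Mathlib

/-- `anc par u v` : `u` is an ancestor of `v` in the rooted tree with parent map `par`. -/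
def anc {V : Type*} (par : V → Option V) (u v : V) : Prop :=
  Relation.TransGen (fun p c => par c = some p) u v

section Aux
variable {V : Type*} [Fintype V] [DecidableEq V] {par : V → Option V} {r : V}

lemma anc_step {u c p : V} (h : anc par u c) (hp : par c = some p) :
    u = p ∨ anc par u p := by
  rcases Relation.TransGen.tail'_iff.1 h with ⟨b, hub, hbc⟩
  have hb : b = p := by rw [hp] at hbc; exact (Option.some.inj hbc).symm
  subst hb
  rcases Relation.reflTransGen_iff_eq_or_transGen.1 hub with h1 | h1
  · exact Or.inl h1.symm
  · exact Or.inr h1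

lemma anc_cyc {v u : V} (h : anc par u v) : anc par v v → anc par u u := by
  induction h with
  | single h =>
      intro hvv
      rcases anc_step hvv h with h1 | h1
      · exact h1 ▸ hvv
      · exact Relation.TransGen.trans (Relation.TransGen.single h : anc par u _) h1
  | tail h1 h2 ih =>
      intro hcc
      rcases anc_step hcc h2 with h3 | h3
      · exact ih (h3 ▸ hcc)
      · exact ih (Relation.TransGen.trans (Relation.TransGen.single h2 : anc par _ _) h3)

lemma anc_irrefl (hroot : par r = none) (hconn : ∀ v : V, v ≠ r → anc par r v)
    {v : V} : ¬ anc par v v := by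
  intro hv
  have hvr : v ≠ r := by
    rintro rfl
    rcases Relation.TransGen.tail'_iff.1 hv with ⟨b, _, hb⟩
    rw [hroot] at hb; cases hb
  have hr := anc_cyc (hconn v hvr) hv
  rcases Relation.TransGen.tail'_iff.1 hr with ⟨b, _, hb⟩
  rw [hroot] at hb; cases hb

lemma anc_comp {a u : V} (h : anc par a u) :
    ∀ {b : V}, anc par b u → a = b ∨ anc par a b ∨ anc par b a := by
  induction h with
  | single h =>
      intro b hb
      rcases anc_step hb h with h1 | h1
      · exact Or.inl h1.symm
      · exact Or.inr (Or.inr h1)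
  | tail h1 h2 ih =>
      intro b hb
      rcases anc_step hb h2 with h3 | h3
      · exact Or.inr (Or.inl (h3 ▸ h1))
      · exact ih h3


noncomputable def desc (par : V → Option V) (v : V) : Finset V :=
  @Finset.filter _ (fun u => anc par v u) (fun _ => Classical.dec _) Finset.univ

lemma mem_desc {v u : V} : u ∈ desc par v ↔ anc par v u := by
  simp [desc]

lemma desc_eq (v : V) : desc par v =
    (Finset.univ.filter fun c => par c = some v).biUnion
      (fun c => insert c (desc par c)) := by
  ext u
  simp only [mem_desc, Finset.mem_biUnion, Finset.mem_filter, Finset.mem_univ, true_and,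
    Finset.mem_insert]
  constructor
  · intro hu
    rcases Relation.TransGen.head'_iff.1 hu with ⟨c, hc, h2⟩
    rcases Relation.reflTransGen_iff_eq_or_transGen.1 h2 with h3 | h3
    · exact ⟨c, hc, Or.inl h3⟩
    · exact ⟨c, hc, Or.inr h3⟩
  · rintro ⟨c, hc, rfl | h2⟩
    · exact Relation.TransGen.single hc
    · exact Relation.TransGen.trans (Relation.TransGen.single hc : anc par v c) h2

variable (hroot : par r = none) (hconn : ∀ v : V, v ≠ r → anc par r v)

include hroot hconn

lemma sibling_not_anc {c c' v : V} (hc : par c = some v) (hc' : par c' = some v) :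
    ¬ anc par c c' := by
  intro hcc
  rcases anc_step hcc hc' with h1 | h1
  · subst h1
    exact anc_irrefl hroot hconn (Relation.TransGen.single hc : anc par c c)
  · exact anc_irrefl hroot hconn
      (Relation.TransGen.trans h1 (Relation.TransGen.single hc : anc par v c))

lemma child_disjoint {c c' v : V} (hc : par c = some v) (hc' : par c' = some v)
    (hcc : c ≠ c') :
    Disjoint (insert c (desc par c)) (insert c' (desc par c')) := by
  rw [Finset.disjoint_left]
  intro u hu hu'
  rcases Finset.mem_insert.1 hu with rfl | hu <;>
    rcases Finset.mem_insert.1 hu' with h' | hu'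
  · exact hcc h'
  · exact sibling_not_anc hroot hconn hc' hc (mem_desc.1 hu')
  · exact sibling_not_anc hroot hconn hc hc' (h' ▸ mem_desc.1 hu)
  · rcases anc_comp (mem_desc.1 hu) (mem_desc.1 hu') with h1 | h1 | h1
    · exact hcc h1
    · exact sibling_not_anc hroot hconn hc hc' h1
    · exact sibling_not_anc hroot hconn hc' hc h1

omit hroot hconn

lemma desc_subset {c v : V} (hc : par c = some v) : desc par c ⊆ desc par v :=
  fun u hu => mem_desc.2
    (Relation.TransGen.trans (Relation.TransGen.single hc : anc par v c) (mem_desc.1 hu))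

lemma child_mem_desc {c v : V} (hc : par c = some v) : c ∈ desc par v :=
  mem_desc.2 (Relation.TransGen.single hc)

include hroot hconn

lemma desc_card_lt {c v : V} (hc : par c = some v) :
    (desc par c).card < (desc par v).card := by
  apply Finset.card_lt_card
  rw [Finset.ssubset_def]
  refine ⟨desc_subset hc, fun hsub => ?_⟩
  exact anc_irrefl hroot hconn (mem_desc.1 (hsub (child_mem_desc hc)))

omit hconn

lemma mem_desc_ne_root {u v : V} (hu : u ∈ desc par v) : u ≠ r := by
  rintro rfl
  rcases Relation.TransGen.tail'_iff.1 (mem_desc.1 hu) with ⟨b, _, hb⟩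
  rw [hroot] at hb; cases hb

include hconn

lemma desc_root : desc par r = Finset.univ.filter (fun v : V => v ≠ r) := by
  ext u
  simp only [mem_desc, Finset.mem_filter, Finset.mem_univ, true_and]
  constructor
  · intro hu
    exact mem_desc_ne_root hroot (mem_desc.2 hu)
  · exact hconn u

lemma parent_mem {u v : V} (hne : ∀ w : V, w ≠ r → par w ≠ none) (hu : u ∈ desc par v) :
    par u = some ((par u).getD r) ∧
      ((par u).getD r = v ∨ (par u).getD r ∈ desc par v) := by
  obtain ⟨p, hp⟩ : ∃ p, par u = some p :=
    Option.ne_none_iff_exists'.1 (hne u (mem_desc_ne_root hroot hu))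
  rw [hp, Option.getD_some]
  refine ⟨rfl, ?_⟩
  rcases anc_step (mem_desc.1 hu) hp with h1 | h1
  · exact Or.inl h1.symm
  · exact Or.inr (mem_desc.2 h1)

omit hroot hconn

variable {D : Type*} [Fintype D] [Nonempty D]

lemma add_inf' {α : Type*} {s : Finset α} (H : s.Nonempty) (a : ℝ) (f : α → ℝ) :
    (s.inf' H fun x => a + f x) = a + s.inf' H f := by
  apply le_antisymm
  · obtain ⟨x, hx, hfx⟩ := Finset.exists_mem_eq_inf' H f
    calc (s.inf' H fun x => a + f x) ≤ a + f x := Finset.inf'_le _ hx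
      _ = a + s.inf' H f := by rw [hfx]
  · exact Finset.le_inf' _ _ fun x hx => (add_le_add_iff_left a).2 (Finset.inf'_le _ hx)

lemma inf'_curry (c : V) (F : D → (V → D) → ℝ)
    (hF : ∀ (d' : D) (σ : V → D), F d' (Function.update σ c d') = F d' σ) :
    (Finset.univ.inf' Finset.univ_nonempty fun σ : V → D => F (σ c) σ)
      = Finset.univ.inf' Finset.univ_nonempty fun d' : D =>
          Finset.univ.inf' Finset.univ_nonempty fun σ : V → D => F d' σ := by
  apply le_antisymm
  · apply Finset.le_inf'
    intro d' _
    apply Finset.le_inf'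
    intro σ _
    have key : F (Function.update σ c d' c) (Function.update σ c d') = F d' σ := by
      rw [Function.update_self]
      exact hF d' σ
    calc (Finset.univ.inf' Finset.univ_nonempty fun σ : V → D => F (σ c) σ)
        ≤ F (Function.update σ c d' c) (Function.update σ c d') :=
          Finset.inf'_le _ (Finset.mem_univ _)
      _ = F d' σ := key
  · apply Finset.le_inf'
    intro σ _
    calc (Finset.univ.inf' Finset.univ_nonempty fun d' : D =>
            Finset.univ.inf' Finset.univ_nonempty fun τ : V → D => F d' τ)
        ≤ Finset.univ.inf' Finset.univ_nonempty fun τ : V → D => F (σ c) τ :=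
          Finset.inf'_le _ (Finset.mem_univ _)
      _ ≤ F (σ c) σ := Finset.inf'_le _ (Finset.mem_univ _)

lemma inf'_sum {ι : Type*} (A : Finset ι) (S : ι → Finset V)
    (hdisj : ∀ c ∈ A, ∀ c' ∈ A, c ≠ c' → Disjoint (S c) (S c'))
    (f : ι → (V → D) → ℝ)
    (hf : ∀ c ∈ A, ∀ σ τ : V → D, (∀ u ∈ S c, σ u = τ u) → f c σ = f c τ) :
    (Finset.univ.inf' Finset.univ_nonempty fun σ : V → D => ∑ c ∈ A, f c σ)
      = ∑ c ∈ A, Finset.univ.inf' Finset.univ_nonempty fun σ : V → D => f c σ := by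
  classical
  apply le_antisymm
  · choose g hg1 hg2 using fun c : ι =>
      Finset.exists_mem_eq_inf' (Finset.univ_nonempty) (fun σ : V → D => f c σ)
    set σs : V → D := fun u =>
      if hcu : ∃ c, c ∈ A ∧ u ∈ S c then g hcu.choose u else Classical.arbitrary D with hσs
    have key : ∀ c ∈ A, f c σs = f c (g c) := by
      intro c hc
      apply hf c hc
      intro u hu
      have hex : ∃ c, c ∈ A ∧ u ∈ S c := ⟨c, hc, hu⟩
      have h1 : σs u = g hex.choose u := by
        rw [hσs]; exact dif_pos hex
      have h2 : hex.choose = c := by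
        by_contra hne'
        exact Finset.disjoint_left.1 (hdisj _ hex.choose_spec.1 c hc hne')
          hex.choose_spec.2 hu
      rw [h1, h2]
    calc (Finset.univ.inf' Finset.univ_nonempty fun σ : V → D => ∑ c ∈ A, f c σ)
        ≤ ∑ c ∈ A, f c σs := Finset.inf'_le _ (Finset.mem_univ _)
      _ = ∑ c ∈ A, Finset.univ.inf' Finset.univ_nonempty fun σ : V → D => f c σ := by
          apply Finset.sum_congr rfl
          intro c hc
          rw [key c hc, hg2]
  · apply Finset.le_inf'
    intro σ _
    exact Finset.sum_le_sum fun c _ => Finset.inf'_le _ (Finset.mem_univ _)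

variable (par r) in
noncomputable def cost (h : V → D → D → ℝ) (v : V) (d : D) (σ : V → D) : ℝ :=
  ∑ u ∈ desc par v, h u (Function.update σ v d u)
    (Function.update σ v d ((par u).getD r))

variable (h : V → D → D → ℝ)

lemma cost_self (v : V) (σ : V → D) :
    cost par r h v (σ v) σ = ∑ u ∈ desc par v, h u (σ u) (σ ((par u).getD r)) := by
  unfold cost
  rw [Function.update_eq_self]

lemma cost_update (c : V) (d' : D) (σ : V → D) :
    cost par r h c d' (Function.update σ c d') = cost par r h c d' σ := by
  unfold cost
  rw [Function.update_idem]

include hroot hconn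

lemma cost_decomp (hne : ∀ w : V, w ≠ r → par w ≠ none) (v : V) (d : D) (σ : V → D) :
    cost par r h v d σ = ∑ c ∈ Finset.univ.filter (fun c : V => par c = some v),
      (h c (σ c) d + ∑ u ∈ desc par c, h u (σ u) (σ ((par u).getD r))) := by
  unfold cost
  rw [desc_eq (par := par) v, Finset.sum_biUnion]
  swap
  · intro c hc c' hc' hcc
    simp only [Finset.coe_filter, Set.mem_setOf_eq, Finset.mem_univ, true_and] at hc hc'
    exact child_disjoint hroot hconn hc hc' hcc
  apply Finset.sum_congr rfl
  intro c hc
  have hcv : par c = some v := (Finset.mem_filter.1 hc).2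
  have hcnev : c ≠ v := by
    rintro rfl
    exact anc_irrefl hroot hconn (Relation.TransGen.single hcv : anc par c c)
  rw [Finset.sum_insert (fun hcc => anc_irrefl hroot hconn (mem_desc.1 hcc))]
  congr 1
  · rw [hcv, Option.getD_some, Function.update_of_ne hcnev, Function.update_self]
  · apply Finset.sum_congr rfl
    intro u hu
    have huv : u ∈ desc par v := desc_subset hcv hu
    have hunev : u ≠ v := by
      rintro rfl
      exact anc_irrefl hroot hconn (mem_desc.1 huv)
    obtain ⟨hp, hpd⟩ := parent_mem hroot hconn hne hu
    have hpnev : (par u).getD r ≠ v := by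
      rcases hpd with h1 | h1
      · rw [h1]; exact hcnev
      · rintro hpv
        exact anc_irrefl hroot hconn (mem_desc.1 (hpv ▸ desc_subset hcv h1))
    rw [Function.update_of_ne hunev, Function.update_of_ne hpnev]

lemma dpop_main (hne : ∀ w : V, w ≠ r → par w ≠ none) (m : V → D → ℝ)
    (hm : ∀ (v : V) (d : D),
      m v d = ∑ c ∈ Finset.univ.filter (fun c : V => par c = some v),
        Finset.univ.inf' Finset.univ_nonempty fun d' : D => h c d' d + m c d') :
    ∀ (n : ℕ) (v : V), (desc par v).card < n → ∀ d : D,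
      m v d = Finset.univ.inf' Finset.univ_nonempty
        (fun σ : V → D => cost par r h v d σ) := by
  intro n
  induction n with
  | zero => intro v hv; exact absurd hv (Nat.not_lt_zero _)
  | succ n ih =>
    intro v hv d
    rw [hm v d]
    have e1 : (fun σ : V → D => cost par r h v d σ) = fun σ =>
        ∑ c ∈ Finset.univ.filter (fun c : V => par c = some v),
          (h c (σ c) d + ∑ u ∈ desc par c, h u (σ u) (σ ((par u).getD r))) :=
      funext fun σ => cost_decomp hroot hconn h hne v d σ
    rw [e1, inf'_sum (Finset.univ.filter (fun c : V => par c = some v))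
      (fun c => insert c (desc par c)) ?hdisj _ ?hf]
    case hdisj =>
      intro c hc c' hc' hcc
      exact child_disjoint hroot hconn (Finset.mem_filter.1 hc).2
        (Finset.mem_filter.1 hc').2 hcc
    case hf =>
      intro c hc σ τ hstau
      have hcv : par c = some v := (Finset.mem_filter.1 hc).2
      rw [hstau c (Finset.mem_insert_self _ _)]
      congr 1
      apply Finset.sum_congr rfl
      intro u hu
      obtain ⟨hp, hpd⟩ := parent_mem hroot hconn hne hu
      have hpm : (par u).getD r ∈ insert c (desc par c) := by
        rcases hpd with h1 | h1
        · rw [h1]; exact Finset.mem_insert_self _ _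
        · exact Finset.mem_insert_of_mem h1
      rw [hstau u (Finset.mem_insert_of_mem hu), hstau _ hpm]
    apply Finset.sum_congr rfl
    intro c hc
    have hcv : par c = some v := (Finset.mem_filter.1 hc).2
    have e2 : (fun σ : V → D =>
          h c (σ c) d + ∑ u ∈ desc par c, h u (σ u) (σ ((par u).getD r)))
        = fun σ => (fun (d' : D) (σ : V → D) => h c d' d + cost par r h c d' σ) (σ c) σ :=
      funext fun σ => by simp only [cost_self]
    rw [e2, inf'_curry c (fun (d' : D) (σ : V → D) => h c d' d + cost par r h c d' σ)
      (fun d' σ => by simp only [cost_update])]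
    have hcard : (desc par c).card < n :=
      lt_of_lt_of_le (desc_card_lt hroot hconn hcv) (Nat.lt_succ_iff.1 hv)
    have e3 : (fun d' : D => Finset.univ.inf' Finset.univ_nonempty
          fun σ : V → D => h c d' d + cost par r h c d' σ)
        = fun d' : D => h c d' d + m c d' := by
      funext d'
      rw [add_inf', ih c hcard d']
    rw [e3]

end Aux


/-- Correctness of the bottom-up DPOP recursion on a rooted tree: if the messages `m`
satisfy `m v d = Σ_{c ∈ C(v)} min_{d'} (h c d' d + m c d')`, then the minimum over all
assignments `σ : V → D` of `Σ_{v ≠ r} h v (σ v) (σ (par v))` equals `min_d (m r d)`. -/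
theorem dpop_tree_recursion_correct {V : Type*} [Fintype V] [DecidableEq V]
    (r : V) (par : V → Option V)
    (hroot : par r = none) (hne : ∀ v : V, v ≠ r → par v ≠ none)
    (hconn : ∀ v : V, v ≠ r → anc par r v)
    {D : Type*} [Fintype D] [Nonempty D]
    (h : V → D → D → ℝ) (m : V → D → ℝ)
    (hm : ∀ (v : V) (d : D),
      m v d = ∑ c ∈ Finset.univ.filter (fun c : V => par c = some v),
        Finset.univ.inf' Finset.univ_nonempty fun d' : D => h c d' d + m c d') :
    (Finset.univ.inf' Finset.univ_nonempty fun σ : V → D =>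
      ∑ v ∈ Finset.univ.filter (fun v : V => v ≠ r), h v (σ v) (σ ((par v).getD r))) =
      Finset.univ.inf' Finset.univ_nonempty fun d : D => m r d := by
  have e0 : (fun σ : V → D =>
        ∑ v ∈ Finset.univ.filter (fun v : V => v ≠ r), h v (σ v) (σ ((par v).getD r)))
      = fun σ : V → D => cost par r h r (σ r) σ := by
    funext σ
    rw [cost_self, desc_root hroot hconn]
  rw [e0, inf'_curry r (fun (d : D) (σ : V → D) => cost par r h r d σ)
    (fun d σ => by simp only [cost_update])]
  have e4 : (fun d : D => Finset.univ.inf' Finset.univ_nonempty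
        fun σ : V → D => cost par r h r d σ) = fun d : D => m r d :=
    funext fun d =>
      (dpop_main hroot hconn h hne m hm ((desc par r).card + 1) r (Nat.lt_succ_self _) d).symm
  rw [e4]
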